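/- arXiv:0912.4190 — 3 statements merged into one kernel-verified Lean document; each statement's English description precedes it below -/
import Mathlib

section
/- Let n ≥ 1 and let μ be a (locally finite, nonnegative) Borel measure on ℝⁿ such that for every t > 0 the pushforward of μ under the dilation x ↦ t x equals μ (equivalently ∫ f(t x) dμ(x) = ∫ f dμ for all nonnegative measurable f). Then μ is a nonnegative multiple of the Dirac measure at 0. -/
open MeasureTheory
open scoped ENNReal

/-- A locally finite Borel measure on `ℝⁿ` (`n ≥ 1`) invariant under all
dilations `x ↦ t x`, `t > 0`, is a nonnegative multiple of the Dirac measure at `0`. -/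
theorem stmt7 (n : ℕ) (hn : 1 ≤ n) (μ : Measure (EuclideanSpace ℝ (Fin n)))
    [IsLocallyFiniteMeasure μ]
    (hinv : ∀ t : ℝ, 0 < t →
      Measure.map (fun x : EuclideanSpace ℝ (Fin n) => t • x) μ = μ) :
    ∃ c : ℝ≥0∞, μ = c • Measure.dirac 0 := by
  -- the annulus of inner radius t
  set S : ℝ → Set (EuclideanSpace ℝ (Fin n)) :=
    fun t => {x | t ≤ ‖x‖ ∧ ‖x‖ < 2 * t} with hS
  have hSmeas : ∀ t : ℝ, MeasurableSet (S t) := by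
    intro t
    have : S t = (fun x : EuclideanSpace ℝ (Fin n) => ‖x‖) ⁻¹' Set.Ico t (2 * t) := rfl
    rw [this]
    exact measurable_norm measurableSet_Ico
  -- all annuli have the same measure
  have key : ∀ t : ℝ, 0 < t → μ (S t) = μ (S 1) := by
    intro t ht
    have hmap := hinv t ht
    have h1 : μ (S t) = μ ((fun x : EuclideanSpace ℝ (Fin n) => t • x) ⁻¹' (S t)) := by
      conv_lhs => rw [← hmap]
      exact Measure.map_apply (measurable_const_smul t) (hSmeas t)
    have h2 : (fun x : EuclideanSpace ℝ (Fin n) => t • x) ⁻¹' (S t) = S 1 := by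
      ext x
      simp only [hS, Set.mem_preimage, Set.mem_setOf_eq, norm_smul, Real.norm_eq_abs,
        abs_of_pos ht, mul_one]
      constructor
      · rintro ⟨h1, h2⟩
        constructor
        · nlinarith
        · nlinarith
      · rintro ⟨h1, h2⟩
        constructor
        · nlinarith
        · nlinarith
    rw [h1, h2]
  -- the common value is zero, because infinitely many disjoint annuli sit in the unit ball
  have hzero : μ (S 1) = 0 := by
    by_contra hne
    set f : ℕ → Set (EuclideanSpace ℝ (Fin n)) := fun j => S ((1/2 : ℝ) ^ (j + 1)) with hf
    have hpos : ∀ j : ℕ, (0:ℝ) < (1/2 : ℝ) ^ (j + 1) := fun j => by positivity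
    have hd : ∀ i j : ℕ, i < j → Disjoint (f i) (f j) := by
      intro i j h
      refine Set.disjoint_left.mpr ?_
      rintro x ⟨hi1, hi2⟩ ⟨hj1, hj2⟩
      have h2t : 2 * (1/2 : ℝ) ^ (j + 1) ≤ (1/2 : ℝ) ^ (i + 1) := by
        have : (1/2 : ℝ) ^ (j + 1) ≤ (1/2 : ℝ) ^ (i + 2) := by
          apply pow_le_pow_of_le_one (by norm_num) (by norm_num) (by omega)
        calc 2 * (1/2 : ℝ) ^ (j + 1) ≤ 2 * (1/2 : ℝ) ^ (i + 2) := by linarith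
          _ = (1/2 : ℝ) ^ (i + 1) := by ring
      linarith
    have hdisj : Pairwise (Function.onFun Disjoint f) := by
      intro i j hij
      rcases lt_or_gt_of_ne hij with h | h
      · exact hd i j h
      · exact (hd j i h).symm
    have hsub : (⋃ j, f j) ⊆ Metric.closedBall (0 : EuclideanSpace ℝ (Fin n)) 2 := by
      intro x hx
      simp only [Set.mem_iUnion] at hx
      obtain ⟨j, hj1, hj2⟩ := hx
      simp only [Metric.mem_closedBall, dist_zero_right]
      have : (1/2 : ℝ) ^ (j + 1) ≤ 1 := by
        apply pow_le_one₀ <;> norm_num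
      linarith
    have hsum : μ (⋃ j, f j) = ∑' j : ℕ, μ (f j) :=
      measure_iUnion hdisj (fun j => hSmeas _)
    have heach : ∀ j : ℕ, μ (f j) = μ (S 1) := fun j => key _ (hpos j)
    have htop : μ (⋃ j, f j) = ∞ := by
      rw [hsum]
      simp only [heach]
      exact ENNReal.tsum_const_eq_top_of_ne_zero hne
    have hfin : μ (Metric.closedBall (0 : EuclideanSpace ℝ (Fin n)) 2) < ∞ :=
      (isCompact_closedBall 0 2).measure_lt_top
    exact absurd (htop ▸ measure_mono hsub) (by simpa using hfin.ne)
  -- hence the complement of {0} is null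
  have hcompl : μ ({(0 : EuclideanSpace ℝ (Fin n))}ᶜ) = 0 := by
    have hcover : ({(0 : EuclideanSpace ℝ (Fin n))}ᶜ : Set _) ⊆ ⋃ k : ℤ, S ((2:ℝ) ^ k) := by
      intro x hx
      have hx0 : x ≠ 0 := hx
      have hxn : (0:ℝ) < ‖x‖ := norm_pos_iff.mpr hx0
      obtain ⟨k, hk1, hk2⟩ := exists_mem_Ico_zpow hxn (by norm_num : (1:ℝ) < 2)
      simp only [Set.mem_iUnion]
      refine ⟨k, hk1, ?_⟩
      have : (2:ℝ) ^ (k + 1) = 2 * (2:ℝ) ^ k := by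
        rw [zpow_add₀ (by norm_num : (2:ℝ) ≠ 0)]; ring
      linarith [this ▸ hk2]
    refine le_antisymm ?_ zero_le
    calc μ ({(0 : EuclideanSpace ℝ (Fin n))}ᶜ) ≤ μ (⋃ k : ℤ, S ((2:ℝ) ^ k)) :=
          measure_mono hcover
      _ ≤ ∑' k : ℤ, μ (S ((2:ℝ) ^ k)) := measure_iUnion_le _
      _ = 0 := by
          simp only [fun k : ℤ => key ((2:ℝ)^k) (zpow_pos (by norm_num) k), hzero,
            tsum_zero]
  refine ⟨μ {0}, Measure.ext fun s hs => ?_⟩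
  have hdiff : μ (s \ {0}) = 0 :=
    measure_mono_null (fun x hx => hx.2) hcompl
  have h1 : μ s = μ (s ∩ {0}) := by
    have h := measure_inter_add_diff (μ := μ) s (measurableSet_singleton (0 : EuclideanSpace ℝ (Fin n)))
    rw [hdiff, add_zero] at h
    exact h.symm
  rw [Measure.smul_apply, Measure.dirac_apply' _ hs, smul_eq_mul]
  by_cases h0 : (0 : EuclideanSpace ℝ (Fin n)) ∈ s
  · rw [h1, Set.inter_eq_right.mpr (by simpa using h0), Set.indicator_of_mem h0]
    simp
  · rw [h1, Set.indicator_of_notMem h0, Set.inter_singleton_eq_empty.mpr h0]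
    simp
end

section
/- More generally, let p, q ≥ 0 with p + q ≥ 1 and let D_t(u,v) = (tu, t²v) be anisotropic dilations on ℝ^p × ℝ^q. If μ is a locally finite nonnegative Borel measure on ℝ^p × ℝ^q satisfying (D_t)_* μ = μ for all t > 0, then μ is a nonnegative multiple of the Dirac measure at the origin. -/
open MeasureTheory
open scoped ENNReal

/-- A locally finite nonnegative Borel measure on `ℝ^p × ℝ^q`
(`p + q ≥ 1`) invariant under all anisotropic dilations `D_t(u,v) = (tu, t²v)`, `t > 0`,
is a nonnegative multiple of the Dirac measure at the origin. -/
theorem stmt8 (p q : ℕ) (hpq : 1 ≤ p + q)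
    (μ : Measure (EuclideanSpace ℝ (Fin p) × EuclideanSpace ℝ (Fin q)))
    [IsLocallyFiniteMeasure μ]
    (hinv : ∀ t : ℝ, 0 < t →
      Measure.map (fun x : EuclideanSpace ℝ (Fin p) × EuclideanSpace ℝ (Fin q) =>
        (t • x.1, (t ^ 2) • x.2)) μ = μ) :
    ∃ c : ℝ≥0∞, μ = c • Measure.dirac 0 := by
  classical
  set X := EuclideanSpace ℝ (Fin p) × EuclideanSpace ℝ (Fin q) with hX
  -- the homogeneous gauge
  set ρ : X → ℝ := fun x => max ‖x.1‖ (Real.sqrt ‖x.2‖) with hρdef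
  have hρcont : Continuous ρ :=
    (continuous_norm.comp continuous_fst).max
      (Real.continuous_sqrt.comp (continuous_norm.comp continuous_snd))
  have hρmeas : Measurable ρ := hρcont.measurable
  have hρnonneg : ∀ x, 0 ≤ ρ x := fun x => le_trans (norm_nonneg _) (le_max_left _ _)
  have hρdil : ∀ (t : ℝ), 0 < t → ∀ x : X,
      ρ (t • x.1, (t ^ 2) • x.2) = t * ρ x := by
    intro t ht x
    simp only [hρdef, norm_smul, Real.norm_eq_abs, abs_of_pos ht,
      abs_of_pos (pow_pos ht 2)]
    rw [Real.sqrt_mul (by positivity : (0:ℝ) ≤ t ^ 2), Real.sqrt_sq ht.le,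
      mul_max_of_nonneg _ _ ht.le]
  have hρzero : ∀ x : X, ρ x = 0 → x = 0 := by
    intro x hx
    have h1 : ‖x.1‖ ≤ 0 := hx ▸ le_max_left _ _
    have h2 : Real.sqrt ‖x.2‖ ≤ 0 := hx ▸ le_max_right _ _
    have h1' : x.1 = 0 := norm_le_zero_iff.mp h1
    have h2' : ‖x.2‖ = 0 := by
      have := Real.sqrt_eq_zero (norm_nonneg x.2) |>.mp
        (le_antisymm h2 (Real.sqrt_nonneg _))
      exact this
    have h2'' : x.2 = 0 := norm_eq_zero.mp h2'
    exact Prod.ext h1' h2''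
  -- measurability of the dilation maps
  have hDmeas : ∀ t : ℝ, Measurable (fun x : X => (t • x.1, (t ^ 2) • x.2)) := by
    intro t
    exact (measurable_fst.const_smul t).prodMk (measurable_snd.const_smul (t ^ 2))
  have hSmeas : ∀ a b : ℝ, MeasurableSet (ρ ⁻¹' Set.Ico a b) :=
    fun a b => hρmeas measurableSet_Ico
  -- scaling identity for annuli
  have hscale : ∀ t : ℝ, 0 < t → ∀ a b : ℝ,
      μ (ρ ⁻¹' Set.Ico a b) = μ (ρ ⁻¹' Set.Ico (a / t) (b / t)) := by
    intro t ht a b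
    conv_lhs => rw [← hinv t ht]
    rw [Measure.map_apply (hDmeas t) (hSmeas a b)]
    congr 1
    ext x
    simp only [Set.mem_preimage, Set.mem_Ico, hρdil t ht x]
    rw [div_le_iff₀ ht, lt_div_iff₀ ht, mul_comm (ρ x) t]
  -- the basic annulus measure
  set c : ℝ≥0∞ := μ (ρ ⁻¹' Set.Ico 1 2) with hc
  -- shrinking annuli all have measure c
  set f : ℕ → Set X := fun n => ρ ⁻¹' Set.Ico ((1/2 : ℝ) ^ (n+1)) ((1/2 : ℝ) ^ n) with hf
  have hfc : ∀ n, μ (f n) = c := by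
    intro n
    have h1 : ((1:ℝ)/2) ^ (n+1) = 1 / 2 ^ (n+1) := by rw [div_pow, one_pow]
    have h2 : ((1:ℝ)/2) ^ n = 2 / 2 ^ (n+1) := by
      rw [div_pow, one_pow, div_eq_div_iff (by positivity) (by positivity)]; ring
    show μ (ρ ⁻¹' Set.Ico ((1/2:ℝ) ^ (n+1)) ((1/2:ℝ) ^ n)) = c
    rw [h1, h2, hc]
    exact (hscale (2 ^ (n+1)) (by positivity) 1 2).symm
  have hfdisj : Pairwise (Function.onFun Disjoint f) := by
    intro m n hmn
    rcases hmn.lt_or_gt with h | h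
    · refine Set.disjoint_left.mpr ?_
      rintro x ⟨hx1, hx2⟩ ⟨hy1, hy2⟩
      have : ((1:ℝ)/2) ^ n ≤ (1/2) ^ (m+1) :=
        pow_le_pow_of_le_one (by norm_num) (by norm_num) h
      linarith
    · refine Set.disjoint_left.mpr ?_
      rintro x ⟨hx1, hx2⟩ ⟨hy1, hy2⟩
      have : ((1:ℝ)/2) ^ m ≤ (1/2) ^ (n+1) :=
        pow_le_pow_of_le_one (by norm_num) (by norm_num) h
      linarith
  -- all of them live in the compact set {ρ ≤ 1}
  set K : Set X := {x | ρ x ≤ 1} with hK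
  have hKcompact : IsCompact K := by
    have hclosed : IsClosed K := isClosed_le hρcont continuous_const
    have hsub : K ⊆ (Metric.closedBall (0 : EuclideanSpace ℝ (Fin p)) 1) ×ˢ
        (Metric.closedBall (0 : EuclideanSpace ℝ (Fin q)) 1) := by
      rintro x (hx : ρ x ≤ 1)
      have h1 : ‖x.1‖ ≤ 1 := le_trans (le_max_left _ _) hx
      have h2 : Real.sqrt ‖x.2‖ ≤ 1 := le_trans (le_max_right _ _) hx
      have h2' : ‖x.2‖ ≤ 1 := by
        nlinarith [Real.sq_sqrt (norm_nonneg x.2), Real.sqrt_nonneg ‖x.2‖]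
      exact ⟨mem_closedBall_zero_iff.mpr h1, mem_closedBall_zero_iff.mpr h2'⟩
    exact ((isCompact_closedBall _ _).prod (isCompact_closedBall _ _)).of_isClosed_subset
      hclosed hsub
  have hKfin : μ K < ⊤ := hKcompact.measure_lt_top
  have hfK : (⋃ n, f n) ⊆ K := by
    rintro x ⟨s, ⟨n, rfl⟩, hx⟩
    rcases hx with ⟨hx1, hx2⟩
    have : ((1:ℝ)/2) ^ n ≤ 1 :=
      pow_le_one₀ (by norm_num) (by norm_num)
    exact le_trans hx2.le this
  -- conclude c = 0
  have hc0 : c = 0 := by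
    by_contra hne
    have htop : ∑' _ : ℕ, c = ⊤ := ENNReal.tsum_const_eq_top_of_ne_zero hne
    have : μ (⋃ n, f n) = ∑' n, μ (f n) :=
      measure_iUnion hfdisj (fun n => hSmeas _ _)
    have hle : (⊤ : ℝ≥0∞) ≤ μ K := by
      calc (⊤ : ℝ≥0∞) = ∑' _ : ℕ, c := htop.symm
        _ = ∑' n, μ (f n) := by simp [hfc]
        _ = μ (⋃ n, f n) := this.symm
        _ ≤ μ K := measure_mono hfK
    exact absurd (lt_of_le_of_lt hle hKfin) (lt_irrefl _)
  -- every dyadic annulus has measure zero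
  have hann : ∀ d : ℝ, 0 < d → μ (ρ ⁻¹' Set.Ico d (2 * d)) = 0 := by
    intro d hd
    have := hscale (1 / d) (by positivity) 1 2
    rw [hc] at hc0
    rw [← hc0, this]
    congr 2 <;> field_simp
  -- the complement of the origin is a countable union of dyadic annuli
  have hcompl : μ ({(0 : X)}ᶜ) = 0 := by
    have hsub : ({(0 : X)}ᶜ : Set X) ⊆
        ⋃ n : ℤ, ρ ⁻¹' Set.Ico ((2:ℝ) ^ n) (2 * (2:ℝ) ^ n) := by
      intro x hx
      have hρx : 0 < ρ x := by
        rcases (hρnonneg x).lt_or_eq with h | h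
        · exact h
        · exact absurd (hρzero x h.symm) hx
      refine Set.mem_iUnion.mpr ⟨⌊Real.logb 2 (ρ x)⌋, ?_, ?_⟩
      · have h1 : ((⌊Real.logb 2 (ρ x)⌋ : ℝ)) ≤ Real.logb 2 (ρ x) := Int.floor_le _
        have h2 : (2:ℝ) ^ ((⌊Real.logb 2 (ρ x)⌋ : ℝ)) ≤ (2:ℝ) ^ Real.logb 2 (ρ x) :=
          Real.rpow_le_rpow_left_iff (by norm_num) |>.mpr h1
        rw [Real.rpow_logb (by norm_num) (by norm_num) hρx] at h2
        calc (2:ℝ) ^ (⌊Real.logb 2 (ρ x)⌋ : ℤ)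
            = (2:ℝ) ^ ((⌊Real.logb 2 (ρ x)⌋ : ℝ)) := (Real.rpow_intCast 2 _).symm
          _ ≤ ρ x := h2
      · have h1 : Real.logb 2 (ρ x) < (⌊Real.logb 2 (ρ x)⌋ : ℝ) + 1 :=
          Int.lt_floor_add_one _
        have h2 : (2:ℝ) ^ Real.logb 2 (ρ x) < (2:ℝ) ^ ((⌊Real.logb 2 (ρ x)⌋ : ℝ) + 1) :=
          Real.rpow_lt_rpow_left_iff (by norm_num) |>.mpr h1
        rw [Real.rpow_logb (by norm_num) (by norm_num) hρx] at h2
        calc ρ x < (2:ℝ) ^ ((⌊Real.logb 2 (ρ x)⌋ : ℝ) + 1) := h2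
          _ = 2 * (2:ℝ) ^ (⌊Real.logb 2 (ρ x)⌋ : ℤ) := by
              rw [Real.rpow_add (by norm_num), Real.rpow_one,
                Real.rpow_intCast, mul_comm]
    refine le_antisymm ?_ zero_le
    calc μ ({(0 : X)}ᶜ) ≤ μ (⋃ n : ℤ, ρ ⁻¹' Set.Ico ((2:ℝ) ^ n) (2 * (2:ℝ) ^ n)) :=
          measure_mono hsub
      _ ≤ ∑' n : ℤ, μ (ρ ⁻¹' Set.Ico ((2:ℝ) ^ n) (2 * (2:ℝ) ^ n)) := measure_iUnion_le _
      _ = 0 := by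
          simp only [fun n : ℤ => hann ((2:ℝ) ^ n) (zpow_pos (by norm_num) n)]
          simp
  -- conclude
  refine ⟨μ {0}, ?_⟩
  rw [← Measure.restrict_singleton]
  refine (Measure.restrict_eq_self_of_ae_mem ?_).symm
  rw [MeasureTheory.ae_iff]
  simpa [Set.compl_def] using hcompl
end

section
/- Abstract open-cell lemma for the Weyl element: let G be a group with subgroups N̄, M, A, N and unique decomposition g = n̄(g) m(g) a(g) n for g in the open cell Ω = N̄MAN. Let w ∈ G be an element normalizing M and A, with μ := w² ∈ M, such that w·a·w^{-1} = a^{-1} for all a ∈ A. Then for every ν̄ ∈ N̄ with w ν̄ ∈ Ω and w·n̄(w ν̄) ∈ Ω, one has: (i) n̄(w·n̄(w ν̄)) = μ ν̄ μ^{-1}; (ii) m(w·n̄(w ν̄)) = μ · m(w ν̄)^{-1}; (iii) a(w·n̄(w ν̄)) = a(w ν̄)^{-1}. -/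
/-- **abstract open-cell lemma for the Weyl element.** In a group `G` with
subgroups `N̄, M, A, N`, open cell `Ω = N̄MAN` with unique decomposition and component maps
`n̄, m, a`, and a Weyl element `w` normalizing `M`, inverting `A` by conjugation, with
`μ := w² ∈ M`, one has for `ν' ∈ N̄` with `wν' ∈ Ω` and `w·n̄(wν') ∈ Ω`:
(i) `n̄(w·n̄(wν')) = μ ν' μ⁻¹`; (ii) `m(w·n̄(wν')) = μ·m(wν')⁻¹`; (iii) `a(w·n̄(wν')) = a(wν')⁻¹`. -/
theorem stmt12 {G : Type*} [Group G]
    (Nb Mm Aa Nn : Subgroup G)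
    (Ω : Set G)
    (hΩ : Ω = {g : G | ∃ x ∈ Nb, ∃ m ∈ Mm, ∃ a ∈ Aa, ∃ n ∈ Nn, g = x * m * a * n})
    (huniq : ∀ x x' m m' a a' n n' : G, x ∈ Nb → x' ∈ Nb → m ∈ Mm → m' ∈ Mm →
      a ∈ Aa → a' ∈ Aa → n ∈ Nn → n' ∈ Nn →
      x * m * a * n = x' * m' * a' * n' → x = x' ∧ m = m' ∧ a = a' ∧ n = n')
    (nb mm aa : G → G)
    (hdec : ∀ g ∈ Ω, nb g ∈ Nb ∧ mm g ∈ Mm ∧ aa g ∈ Aa ∧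
      ∃ n ∈ Nn, g = nb g * mm g * aa g * n)
    (hMA : ∀ m ∈ Mm, ∀ a ∈ Aa, m * a = a * m)
    (hMNb : ∀ m ∈ Mm, ∀ x ∈ Nb, m * x * m⁻¹ ∈ Nb)
    (hMN : ∀ m ∈ Mm, ∀ n ∈ Nn, m * n * m⁻¹ ∈ Nn)
    (hANb : ∀ a ∈ Aa, ∀ x ∈ Nb, a * x * a⁻¹ ∈ Nb)
    (hAN : ∀ a ∈ Aa, ∀ n ∈ Nn, a * n * a⁻¹ ∈ Nn)
    (w : G) (hw2 : w * w ∈ Mm)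
    (hwM : ∀ m ∈ Mm, w * m * w⁻¹ ∈ Mm)
    (hwA : ∀ a ∈ Aa, w * a * w⁻¹ = a⁻¹)
    (ν' : G) (hν' : ν' ∈ Nb) (h1 : w * ν' ∈ Ω) (h2 : w * nb (w * ν') ∈ Ω) :
    nb (w * nb (w * ν')) = (w * w) * ν' * (w * w)⁻¹ ∧
    mm (w * nb (w * ν')) = (w * w) * (mm (w * ν'))⁻¹ ∧
    aa (w * nb (w * ν')) = (aa (w * ν'))⁻¹ := by
  obtain ⟨hx1, hm1, ha1, n, hn, hd1⟩ := hdec _ h1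
  obtain ⟨hx2, hm2, ha2, n2, hn2, hd2⟩ := hdec _ h2
  set x := nb (w * ν') with hxdef
  set m := mm (w * ν') with hmdef
  set a := aa (w * ν') with hadef
  have hcomm := hMA m hm1 a ha1
  have hcomm' : m⁻¹ * a⁻¹ = a⁻¹ * m⁻¹ := by
    rw [← mul_inv_rev, ← mul_inv_rev, hcomm]
  have hx : x = w * ν' * n⁻¹ * a⁻¹ * m⁻¹ := by
    rw [hd1]; group
  have key : w * x = ((w * w) * ν' * (w * w)⁻¹) * ((w * w) * m⁻¹) * a⁻¹ *
      (m * (a * n⁻¹ * a⁻¹) * m⁻¹) := by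
    rw [hx]
    have hcomm2 : m * a⁻¹ = a⁻¹ * m := Commute.inv_right hcomm
    calc w * (w * ν' * n⁻¹ * a⁻¹ * m⁻¹)
        = (w * w) * ν' * (m⁻¹ * (m * a⁻¹) * a) * n⁻¹ * a⁻¹ * m⁻¹ := by group
      _ = (w * w) * ν' * (m⁻¹ * (a⁻¹ * m) * a) * n⁻¹ * a⁻¹ * m⁻¹ := by rw [hcomm2]
      _ = _ := by group
  have hmem1 : (w * w) * ν' * (w * w)⁻¹ ∈ Nb := hMNb _ hw2 _ hν'
  have hmem2 : (w * w) * m⁻¹ ∈ Mm := mul_mem hw2 (inv_mem hm1)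
  have hmem3 : a⁻¹ ∈ Aa := inv_mem ha1
  have hmem4 : m * (a * n⁻¹ * a⁻¹) * m⁻¹ ∈ Nn :=
    hMN _ hm1 _ (hAN _ ha1 _ (inv_mem hn))
  have := huniq _ _ _ _ _ _ _ _ hx2 hmem1 hm2 hmem2 ha2 hmem3 hn2 hmem4
    (hd2.symm.trans key)
  exact ⟨this.1, this.2.1, this.2.2.1⟩
end
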